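/- arXiv:1103.6243 — 2 statements merged into one kernel-verified Lean document; each statement's English description precedes it below -/
import Mathlib

section
/- Let H be a split exact functor from locally convex algebras to abelian groups, and let φ, ψ : A → B be continuous algebra homomorphisms that are orthogonal, i.e. φ(a)ψ(a′) = 0 = ψ(a)φ(a′) for all a, a′ ∈ A (so that φ + ψ is again a homomorphism). Then H(φ + ψ) = H(φ) + H(ψ). -/
/-!  A framework for locally convex algebras, split exact functors,
quasihomomorphisms and locally convex Kasparov modules, following
M. Grensing, "Universal cycles and homological invariants of locally convex
algebras". -/

noncomputable section

open scoped Topology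

/-- A locally convex algebra: a complete locally convex topological vector
space over `ℂ` together with a continuous associative bilinear multiplication. -/
structure LCA : Type 1 where
  carrier : Type
  [ring : NonUnitalRing carrier]
  [modC : Module ℂ carrier]
  [modR : Module ℝ carrier]
  [towerRC : IsScalarTower ℝ ℂ carrier]
  [towerC : IsScalarTower ℂ carrier carrier]
  [commC : SMulCommClass ℂ carrier carrier]
  [us : UniformSpace carrier]
  [uag : IsUniformAddGroup carrier]
  [csmul : ContinuousSMul ℂ carrier]
  [cmul : ContinuousMul carrier]
  [cmplt : CompleteSpace carrier]
  [lcs : LocallyConvexSpace ℝ carrier]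

attribute [instance] LCA.ring LCA.modC LCA.modR LCA.towerRC LCA.towerC LCA.commC
  LCA.us LCA.uag LCA.csmul LCA.cmul LCA.cmplt LCA.lcs

instance (A : LCA) : Nonempty A.carrier := ⟨0⟩

/-- Morphisms of locally convex algebras: continuous `ℂ`-algebra homomorphisms. -/
structure LCAHom (A B : LCA) where
  toFun : A.carrier → B.carrier
  map_add' : ∀ x y, toFun (x + y) = toFun x + toFun y
  map_mul' : ∀ x y, toFun (x * y) = toFun x * toFun y
  map_smul' : ∀ (c : ℂ) (x), toFun (c • x) = c • toFun x
  cont' : Continuous toFun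

namespace LCAHom

protected def id (A : LCA) : LCAHom A A :=
  ⟨fun x => x, fun _ _ => rfl, fun _ _ => rfl, fun _ _ => rfl, continuous_id⟩

def comp {A B C : LCA} (g : LCAHom B C) (f : LCAHom A B) : LCAHom A C where
  toFun := fun x => g.toFun (f.toFun x)
  map_add' := fun x y => by (try simp only []); rw [f.map_add', g.map_add']
  map_mul' := fun x y => by (try simp only []); rw [f.map_mul', g.map_mul']
  map_smul' := fun c x => by (try simp only []); rw [f.map_smul', g.map_smul']
  cont' := g.cont'.comp f.cont'

protected lemma map_zero {A B : LCA} (f : LCAHom A B) : f.toFun 0 = 0 := by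
  have h := f.map_add' 0 0
  rw [add_zero] at h
  exact (left_eq_add.mp h)

/-- The underlying (non-unital) `ℂ`-algebra homomorphism. -/
def toNA {A B : LCA} (f : LCAHom A B) : A.carrier →ₙₐ[ℂ] B.carrier where
  toFun := f.toFun
  map_add' := f.map_add'
  map_mul' := f.map_mul'
  map_smul' := f.map_smul'
  map_zero' := f.map_zero

end LCAHom

/-- A functor from locally convex algebras to abelian groups. -/
structure LCFunctor where
  obj : LCA → Type
  [ab : ∀ A, AddCommGroup (obj A)]
  map : ∀ {A B : LCA}, LCAHom A B → (obj A →+ obj B)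
  map_id : ∀ A : LCA, map (LCAHom.id A) = AddMonoidHom.id (obj A)
  map_comp : ∀ {A B C : LCA} (f : LCAHom A B) (g : LCAHom B C),
      map (g.comp f) = (map g).comp (map f)

attribute [instance] LCFunctor.ab

/-- A short exact sequence of locally convex algebras which is split by a
continuous algebra homomorphism. -/
structure SplitExactSeq (C B A : LCA) where
  ι : LCAHom C B
  π : LCAHom B A
  σ : LCAHom A B
  ι_inj : Function.Injective ι.toFun
  π_surj : Function.Surjective π.toFun
  exact : ∀ b, π.toFun b = 0 ↔ b ∈ Set.range ι.toFun
  is_split : ∀ a, π.toFun (σ.toFun a) = a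

/-- A functor is split exact if it maps split exact sequences of locally convex
algebras to (split) exact sequences of abelian groups. -/
def LCFunctor.IsSplitExact (H : LCFunctor) : Prop :=
  ∀ ⦃C B A : LCA⦄ (E : SplitExactSeq C B A),
    Function.Injective (H.map E.ι) ∧ Function.Surjective (H.map E.π) ∧
      ∀ x, H.map E.π x = 0 ↔ x ∈ Set.range (H.map E.ι)

/-- A double split extension of locally convex algebras: a split short exact
sequence together with a second splitting. -/
structure DoubleSplitSeq (B D A : LCA) where
  ι : LCAHom B D
  π : LCAHom D A
  σ : LCAHom A D
  σ' : LCAHom A D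
  ι_inj : Function.Injective ι.toFun
  π_surj : Function.Surjective π.toFun
  exact : ∀ d, π.toFun d = 0 ↔ d ∈ Set.range ι.toFun
  is_split : ∀ a, π.toFun (σ.toFun a) = a
  is_split' : ∀ a, π.toFun (σ'.toFun a) = a

/-- The morphism `H(σ,σ̄) = H(ι)⁻¹ ∘ (H(σ) - H(σ̄))` induced by a double split
extension under a (split exact) functor `H`. -/
def DoubleSplitSeq.induced {B D A : LCA} (E : DoubleSplitSeq B D A) (H : LCFunctor) :
    H.obj A → H.obj B :=
  fun x => Function.invFun (H.map E.ι) (H.map E.σ x - H.map E.σ' x)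

/-! ### Statement 3: split exact functors are additive on orthogonal homomorphisms -/

/-- The sum `φ + ψ` of two orthogonal homomorphisms is again a homomorphism. -/
def orthSum {A B : LCA} (φ ψ : LCAHom A B)
    (h : ∀ a a', φ.toFun a * ψ.toFun a' = 0 ∧ ψ.toFun a * φ.toFun a' = 0) :
    LCAHom A B where
  toFun a := φ.toFun a + ψ.toFun a
  map_add' := fun x y => by (try simp only []); rw [φ.map_add', ψ.map_add']; abel
  map_mul' := fun x y => by
    try simp only []
    rw [φ.map_mul', ψ.map_mul', add_mul, mul_add, mul_add, (h x y).1, (h x y).2]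
    abel
  map_smul' := fun c x => by (try simp only []); rw [φ.map_smul', ψ.map_smul', smul_add]
  cont' := φ.cont'.add ψ.cont'

namespace LCAHom

protected lemma ext' {A B : LCA} {f g : LCAHom A B} (h : f.toFun = g.toFun) : f = g := by
  cases f; cases g; simp only [] at h; subst h; rfl

end LCAHom

/-- The one-point locally convex algebra. -/
def punitLCA : LCA where
  carrier := PUnit

instance : Subsingleton punitLCA.carrier := ⟨fun _ _ => rfl⟩

/-- The zero morphism to the one-point algebra. -/
def toPUnitHom (A : LCA) : LCAHom A punitLCA where
  toFun _ := 0
  map_add' _ _ := Subsingleton.elim _ _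
  map_mul' _ _ := Subsingleton.elim _ _
  map_smul' _ _ := Subsingleton.elim _ _
  cont' := continuous_const

/-- The zero morphism from the one-point algebra. -/
def fromPUnitHom (B : LCA) : LCAHom punitLCA B where
  toFun _ := 0
  map_add' _ _ := (add_zero (0 : B.carrier)).symm
  map_mul' _ _ := (mul_zero (0 : B.carrier)).symm
  map_smul' c _ := (smul_zero c).symm
  cont' := continuous_const

/-- The identity split exact sequence on the one-point algebra. -/
def punitSeq : SplitExactSeq punitLCA punitLCA punitLCA where
  ι := LCAHom.id punitLCA
  π := LCAHom.id punitLCA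
  σ := LCAHom.id punitLCA
  ι_inj := fun _ _ h => h
  π_surj := fun a => ⟨a, rfl⟩
  exact := fun b => ⟨fun _ => ⟨b, rfl⟩, fun _ => Subsingleton.elim _ _⟩
  is_split := fun _ => rfl

lemma punit_obj_trivial (H : LCFunctor) (hH : H.IsSplitExact) (x : H.obj punitLCA) :
    x = 0 := by
  have hι : punitSeq.ι = LCAHom.id punitLCA := rfl
  have hπ : punitSeq.π = LCAHom.id punitLCA := rfl
  have h := ((hH punitSeq).2.2 x).mpr ⟨x, by rw [hι, H.map_id]; rfl⟩
  rwa [hπ, H.map_id] at h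

lemma map_zero_hom (H : LCFunctor) (hH : H.IsSplitExact) {A B : LCA}
    (f : LCAHom A B) (hf : ∀ a, f.toFun a = 0) (x : H.obj A) : H.map f x = 0 := by
  have hfac : f = (fromPUnitHom B).comp (toPUnitHom A) :=
    LCAHom.ext' (funext fun a => hf a)
  rw [hfac, H.map_comp, AddMonoidHom.comp_apply,
    punit_obj_trivial H hH (H.map (toPUnitHom A) x), map_zero]

/-- The product of two locally convex algebras. -/
def prodLCA (A B : LCA) : LCA where
  carrier := A.carrier × B.carrier

def fstHom (A B : LCA) : LCAHom (prodLCA A B) A where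
  toFun p := p.1
  map_add' _ _ := rfl
  map_mul' _ _ := rfl
  map_smul' _ _ := rfl
  cont' := continuous_fst

def sndHom (A B : LCA) : LCAHom (prodLCA A B) B where
  toFun p := p.2
  map_add' _ _ := rfl
  map_mul' _ _ := rfl
  map_smul' _ _ := rfl
  cont' := continuous_snd

def inlHom (A B : LCA) : LCAHom A (prodLCA A B) where
  toFun a := (a, 0)
  map_add' x y := Prod.ext rfl (add_zero (0 : B.carrier)).symm
  map_mul' x y := Prod.ext rfl (mul_zero (0 : B.carrier)).symm
  map_smul' c x := Prod.ext rfl (smul_zero c).symm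
  cont' := continuous_id.prodMk continuous_const

def inrHom (A B : LCA) : LCAHom B (prodLCA A B) where
  toFun b := (0, b)
  map_add' x y := Prod.ext (add_zero (0 : A.carrier)).symm rfl
  map_mul' x y := Prod.ext (mul_zero (0 : A.carrier)).symm rfl
  map_smul' c x := Prod.ext (smul_zero c).symm rfl
  cont' := continuous_const.prodMk continuous_id

def diagHom (A : LCA) : LCAHom A (prodLCA A A) where
  toFun a := (a, a)
  map_add' _ _ := rfl
  map_mul' _ _ := rfl
  map_smul' _ _ := rfl
  cont' := continuous_id.prodMk continuous_id

/-- The split exact sequence `0 → A → A × B → B → 0`. -/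
def prodSeq (A B : LCA) : SplitExactSeq A (prodLCA A B) B where
  ι := inlHom A B
  π := sndHom A B
  σ := inrHom A B
  ι_inj := fun a b h => congrArg Prod.fst h
  π_surj := fun b => ⟨(0, b), rfl⟩
  exact := fun p =>
    ⟨fun h => ⟨p.1, Prod.ext rfl h.symm⟩, fun ⟨a, ha⟩ => ha ▸ rfl⟩
  is_split := fun b => rfl

/-- The key orthogonal-sum homomorphism `A × A → B`; it is multiplicative
precisely because `φ` and `ψ` are orthogonal. -/
def orthSumProd {A B : LCA} (φ ψ : LCAHom A B)
    (h : ∀ a a', φ.toFun a * ψ.toFun a' = 0 ∧ ψ.toFun a * φ.toFun a' = 0) :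
    LCAHom (prodLCA A A) B where
  toFun p := φ.toFun p.1 + ψ.toFun p.2
  map_add' x y := by
    show φ.toFun (x.1 + y.1) + ψ.toFun (x.2 + y.2) = _
    rw [φ.map_add', ψ.map_add']; abel
  map_mul' x y := by
    show φ.toFun (x.1 * y.1) + ψ.toFun (x.2 * y.2) = _
    rw [φ.map_mul', ψ.map_mul', add_mul, mul_add, mul_add, (h x.1 y.2).1,
      (h x.2 y.1).2]
    abel
  map_smul' c x := by
    show φ.toFun (c • x.1) + ψ.toFun (c • x.2) = _
    rw [φ.map_smul', ψ.map_smul', smul_add]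
  cont' := ((φ.cont'.comp continuous_fst).add (ψ.cont'.comp continuous_snd))

lemma decomp (H : LCFunctor) (hH : H.IsSplitExact) (A B : LCA)
    (y : H.obj (prodLCA A B)) :
    y = H.map (inlHom A B) (H.map (fstHom A B) y)
      + H.map (inrHom A B) (H.map (sndHom A B) y) := by
  obtain ⟨hinj, hsurj, hexact⟩ := hH (prodSeq A B)
  have hι : (prodSeq A B).ι = inlHom A B := rfl
  have hπ : (prodSeq A B).π = sndHom A B := rfl
  rw [hι] at hexact
  rw [hπ] at hexact
  have h1 : H.map (sndHom A B) (y - H.map (inrHom A B) (H.map (sndHom A B) y)) = 0 := by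
    have hcomp : (sndHom A B).comp (inrHom A B) = LCAHom.id B := LCAHom.ext' rfl
    rw [map_sub, ← AddMonoidHom.comp_apply (H.map (sndHom A B)), ← H.map_comp]
    rw [hcomp, H.map_id, AddMonoidHom.id_apply, sub_self]
  obtain ⟨w, hw⟩ := (hexact _).mp h1
  have hw2 := congrArg (H.map (fstHom A B)) hw
  have hid : (fstHom A B).comp (inlHom A B) = LCAHom.id A := LCAHom.ext' rfl
  rw [← AddMonoidHom.comp_apply (H.map (fstHom A B)), ← H.map_comp, hid, H.map_id,
    AddMonoidHom.id_apply, map_sub] at hw2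
  have h0 : H.map (fstHom A B) (H.map (inrHom A B) (H.map (sndHom A B) y)) = 0 := by
    rw [← AddMonoidHom.comp_apply (H.map (fstHom A B)), ← H.map_comp]
    exact map_zero_hom H hH _ (fun b => rfl) _
  rw [h0, sub_zero] at hw2
  rw [hw2] at hw
  rw [hw]; abel

/-- **Statement 3.** If `H` is a split exact functor on locally convex algebras
and `φ, ψ : A → B` are orthogonal continuous algebra homomorphisms, then
`H(φ + ψ) = H(φ) + H(ψ)`. -/
theorem split_exact_functor_additive_on_orthogonal
    (H : LCFunctor) (hH : H.IsSplitExact) (A B : LCA) (φ ψ : LCAHom A B)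
    (h : ∀ a a', φ.toFun a * ψ.toFun a' = 0 ∧ ψ.toFun a * φ.toFun a' = 0) :
    H.map (orthSum φ ψ h) = H.map φ + H.map ψ := by
  apply AddMonoidHom.ext
  intro x
  have hfac : orthSum φ ψ h = (orthSumProd φ ψ h).comp (diagHom A) :=
    LCAHom.ext' rfl
  have hfd : (fstHom A A).comp (diagHom A) = LCAHom.id A := LCAHom.ext' rfl
  have hsd : (sndHom A A).comp (diagHom A) = LCAHom.id A := LCAHom.ext' rfl
  have hφ : (orthSumProd φ ψ h).comp (inlHom A A) = φ :=
    LCAHom.ext' (funext fun a => by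
      show φ.toFun a + ψ.toFun 0 = φ.toFun a
      rw [LCAHom.map_zero, add_zero])
  have hψ : (orthSumProd φ ψ h).comp (inrHom A A) = ψ :=
    LCAHom.ext' (funext fun a => by
      show φ.toFun 0 + ψ.toFun a = ψ.toFun a
      rw [LCAHom.map_zero, zero_add])
  have hdiag := decomp H hH A A (H.map (diagHom A) x)
  rw [← AddMonoidHom.comp_apply (H.map (fstHom A A)), ← H.map_comp, hfd, H.map_id,
    AddMonoidHom.id_apply, ← AddMonoidHom.comp_apply (H.map (sndHom A A)),
    ← H.map_comp, hsd, H.map_id, AddMonoidHom.id_apply] at hdiag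
  have : H.map (orthSum φ ψ h) x
      = H.map (orthSumProd φ ψ h) (H.map (diagHom A) x) := by
    rw [hfac, H.map_comp, AddMonoidHom.comp_apply]
  rw [this, hdiag, map_add, ← AddMonoidHom.comp_apply (H.map (orthSumProd φ ψ h)),
    ← H.map_comp, hφ, ← AddMonoidHom.comp_apply (H.map (orthSumProd φ ψ h)),
    ← H.map_comp, hψ, AddMonoidHom.add_apply]
end
end

section
/- Consider a 3×3 diagram of locally convex algebras I^i_j (i,j = 1,2,3) in which each row 0 → I^i_1 → I^i_2 → I^i_3 → 0 (with maps φ^i_{12}, φ^i_{23}) is a double split short exact sequence with splittings σ^i_{23}, σ̄^i_{23} : I^i_3 → I^i_2, and each column 0 → I^1_j → I^2_j → I^3_j → 0 (with maps φ^{12}_j, φ^{23}_j) is a double split short exact sequence with splittings σ^{23}_j, σ̄^{23}_j : I^3_j → I^2_j. Suppose all squares involving only the maps φ commute, and that φ^2_{12}∘σ^{23}_1 = σ^{23}_2∘φ^3_{12}, σ^2_{23}∘φ^1_{23} = φ^{12}_2∘σ^1_{23}, σ^{23}_2∘σ^3_{23} = σ^2_{23}∘σ^{23}_3, the same three relations hold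 with every σ replaced by σ̄, and moreover σ̄^{23}_2∘σ^3_{23} = σ^2_{23}∘σ̄^{23}_3 and σ^{23}_2∘σ̄^3_{23} = σ̄^2_{23}∘σ^{23}_3. Then for every split exact functor H from locally convex algebras to abelian groups, H(σ^{23}_1, σ̄^{23}_1) ∘ H(σ^3_{23}, σ̄^3_{23}) = H(σ^1_{23}, σ̄^1_{23}) ∘ H(σ^{23}_3, σ̄^{23}_3). -/
/-!  A framework for locally convex algebras, split exact functors,
quasihomomorphisms and locally convex Kasparov modules, following
M. Grensing, "Universal cycles and homological invariants of locally convex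
algebras". -/

noncomputable section

open scoped Topology

lemma LCAHom.ext'_s4 {A B : LCA} {f g : LCAHom A B} (h : ∀ x, f.toFun x = g.toFun x) :
    f = g := by
  cases f; cases g
  simp only [LCAHom.mk.injEq]
  exact funext h

/-- Forget the second splitting. -/
def DoubleSplitSeq.toSplit {B D A : LCA} (E : DoubleSplitSeq B D A) : SplitExactSeq B D A :=
  ⟨E.ι, E.π, E.σ, E.ι_inj, E.π_surj, E.exact, E.is_split⟩

lemma map_comp_apply (H : LCFunctor) {A B C : LCA} (f : LCAHom A B) (g : LCAHom B C)
    (x : H.obj A) : H.map g (H.map f x) = H.map (g.comp f) x := by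
  rw [H.map_comp]; rfl

lemma LCmap_congr (H : LCFunctor) {A B : LCA} {f g : LCAHom A B}
    (h : ∀ x, f.toFun x = g.toFun x) (x : H.obj A) : H.map f x = H.map g x := by
  rw [LCAHom.ext'_s4 h]

lemma induced_spec {B D A : LCA} (E : DoubleSplitSeq B D A) (H : LCFunctor)
    (hH : H.IsSplitExact) (x : H.obj A) :
    H.map E.ι (E.induced H x) = H.map E.σ x - H.map E.σ' x := by
  have hπσ : H.map E.π (H.map E.σ x) = x := by
    rw [map_comp_apply]
    rw [show E.π.comp E.σ = LCAHom.id A from LCAHom.ext'_s4 E.is_split, H.map_id]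
    rfl
  have hπσ' : H.map E.π (H.map E.σ' x) = x := by
    rw [map_comp_apply]
    rw [show E.π.comp E.σ' = LCAHom.id A from LCAHom.ext'_s4 E.is_split', H.map_id]
    rfl
  have hmem : H.map E.σ x - H.map E.σ' x ∈ Set.range (H.map E.ι) := by
    have hex := (hH E.toSplit).2.2 (H.map E.σ x - H.map E.σ' x)
    exact hex.mp (by simp [map_sub, hπσ, hπσ', DoubleSplitSeq.toSplit])
  exact Function.invFun_eq hmem

/-! ### Statement 9: the 3×3 diagram of double split extensions -/

/-- **Statement 9.** Given a 3×3 diagram of locally convex algebras whose rows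
`Rᵢ : 0 → Iᵢ₁ → Iᵢ₂ → Iᵢ₃ → 0` and columns `Cⱼ : 0 → I₁ⱼ → I₂ⱼ → I₃ⱼ → 0` are
double split short exact sequences, such that all squares of the maps `φ`
commute and the splittings satisfy the stated compatibility relations, the
morphisms induced under any split exact functor `H` by the outer edges agree:
`H(σ²³₁, σ̄²³₁) ∘ H(σ³₂₃, σ̄³₂₃) = H(σ¹₂₃, σ̄¹₂₃) ∘ H(σ²³₃, σ̄²³₃)`. -/
theorem three_by_three_double_split_diagram
    (I11 I12 I13 I21 I22 I23 I31 I32 I33 : LCA)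
    (R1 : DoubleSplitSeq I11 I12 I13) (R2 : DoubleSplitSeq I21 I22 I23)
    (R3 : DoubleSplitSeq I31 I32 I33)
    (C1 : DoubleSplitSeq I11 I21 I31) (C2 : DoubleSplitSeq I12 I22 I32)
    (C3 : DoubleSplitSeq I13 I23 I33)
    -- all squares involving only the morphisms `φ` commute:
    (hsq1 : ∀ x, C2.ι.toFun (R1.ι.toFun x) = R2.ι.toFun (C1.ι.toFun x))
    (hsq2 : ∀ x, C3.ι.toFun (R1.π.toFun x) = R2.π.toFun (C2.ι.toFun x))
    (hsq3 : ∀ x, C2.π.toFun (R2.ι.toFun x) = R3.ι.toFun (C1.π.toFun x))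
    (hsq4 : ∀ x, C3.π.toFun (R2.π.toFun x) = R3.π.toFun (C2.π.toFun x))
    -- compatibility of the splittings `σ`:
    (hs1 : ∀ x, R2.ι.toFun (C1.σ.toFun x) = C2.σ.toFun (R3.ι.toFun x))
    (hs2 : ∀ x, R2.σ.toFun (C3.ι.toFun x) = C2.ι.toFun (R1.σ.toFun x))
    (hs3 : ∀ x, C2.σ.toFun (R3.σ.toFun x) = R2.σ.toFun (C3.σ.toFun x))
    -- the same relations with every `σ` replaced by `σ̄`:
    (hs1' : ∀ x, R2.ι.toFun (C1.σ'.toFun x) = C2.σ'.toFun (R3.ι.toFun x))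
    (hs2' : ∀ x, R2.σ'.toFun (C3.ι.toFun x) = C2.ι.toFun (R1.σ'.toFun x))
    (hs3' : ∀ x, C2.σ'.toFun (R3.σ'.toFun x) = R2.σ'.toFun (C3.σ'.toFun x))
    -- the mixed relations:
    (hm1 : ∀ x, C2.σ'.toFun (R3.σ.toFun x) = R2.σ.toFun (C3.σ'.toFun x))
    (hm2 : ∀ x, C2.σ.toFun (R3.σ'.toFun x) = R2.σ'.toFun (C3.σ.toFun x))
    (H : LCFunctor) (hH : H.IsSplitExact) :
    ∀ x : H.obj I33,
      C1.induced H (R3.induced H x) = R1.induced H (C3.induced H x) := by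
  intro x
  have injR1 := (hH R1.toSplit).1
  have injC2 := (hH C2.toSplit).1
  set L := C1.induced H (R3.induced H x) with hL
  set Rr := R1.induced H (C3.induced H x) with hRr
  have compσ : ∀ y, H.map R2.ι (H.map C1.σ y) = H.map C2.σ (H.map R3.ι y) := fun y => by
    rw [map_comp_apply, map_comp_apply]; exact LCmap_congr H hs1 y
  have compσ' : ∀ y, H.map R2.ι (H.map C1.σ' y) = H.map C2.σ' (H.map R3.ι y) := fun y => by
    rw [map_comp_apply, map_comp_apply]; exact LCmap_congr H hs1' y
  have compτ : ∀ y, H.map C2.ι (H.map R1.σ y) = H.map R2.σ (H.map C3.ι y) := fun y => by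
    rw [map_comp_apply, map_comp_apply]; exact LCmap_congr H (fun z => (hs2 z).symm) y
  have compτ' : ∀ y, H.map C2.ι (H.map R1.σ' y) = H.map R2.σ' (H.map C3.ι y) := fun y => by
    rw [map_comp_apply, map_comp_apply]; exact LCmap_congr H (fun z => (hs2' z).symm) y
  have m1 : H.map C2.σ (H.map R3.σ x) = H.map R2.σ (H.map C3.σ x) := by
    rw [map_comp_apply, map_comp_apply]; exact LCmap_congr H hs3 x
  have m2 : H.map C2.σ (H.map R3.σ' x) = H.map R2.σ' (H.map C3.σ x) := by
    rw [map_comp_apply, map_comp_apply]; exact LCmap_congr H hm2 x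
  have m3 : H.map C2.σ' (H.map R3.σ x) = H.map R2.σ (H.map C3.σ' x) := by
    rw [map_comp_apply, map_comp_apply]; exact LCmap_congr H hm1 x
  have m4 : H.map C2.σ' (H.map R3.σ' x) = H.map R2.σ' (H.map C3.σ' x) := by
    rw [map_comp_apply, map_comp_apply]; exact LCmap_congr H hs3' x
  have e1 : H.map R2.ι (H.map C1.ι L) =
      H.map C2.σ (H.map R3.σ x) - H.map C2.σ (H.map R3.σ' x)
        - (H.map C2.σ' (H.map R3.σ x) - H.map C2.σ' (H.map R3.σ' x)) := by
    rw [hL, induced_spec C1 H hH, map_sub, compσ, compσ', induced_spec R3 H hH,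
      map_sub, map_sub]
  have e2 : H.map C2.ι (H.map R1.ι Rr) =
      H.map R2.σ (H.map C3.σ x) - H.map R2.σ (H.map C3.σ' x)
        - (H.map R2.σ' (H.map C3.σ x) - H.map R2.σ' (H.map C3.σ' x)) := by
    rw [hRr, induced_spec R1 H hH, map_sub, compτ, compτ', induced_spec C3 H hH,
      map_sub, map_sub]
  have key : H.map R2.ι (H.map C1.ι L) = H.map C2.ι (H.map R1.ι Rr) := by
    rw [e1, e2, m1, m2, m3, m4]; abel
  apply injR1
  apply injC2
  calc H.map C2.ι (H.map R1.ι L) = H.map R2.ι (H.map C1.ι L) := by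
        rw [map_comp_apply, map_comp_apply]; exact LCmap_congr H hsq1 L
    _ = H.map C2.ι (H.map R1.ι Rr) := key
end
end
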